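/- Let A, B be closed operators with A ⊣ B via bounded T, where T⁻¹ is everywhere defined and bounded and T(D(A)) is a core for B. Then σ_p(A) ⊆ σ_p(B) ⊆ σ(B) ⊆ σ(A). -/

import Mathlib

open scoped InnerProductSpace

variable {H : Type*} [NormedAddCommGroup H] [InnerProductSpace ℂ H]

/-- The point spectrum (set of eigenvalues) of a partially defined operator. -/
def pointSpectrum (A : H →ₗ.[ℂ] H) : Set ℂ :=
  {l | ∃ ξ : A.domain, (ξ : H) ≠ 0 ∧ A ξ = l • (ξ : H)}

/-- The resolvent set of a partially defined operator. -/
def resSet (A : H →ₗ.[ℂ] H) : Set ℂ :=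
  {l | ∃ R : H →L[ℂ] H,
    (∀ η : H, ∃ h : R η ∈ A.domain, A ⟨R η, h⟩ - l • R η = η) ∧
    (∀ ξ : A.domain, R (A ξ - l • (ξ : H)) = (ξ : H))}

/-- If `A ⊣ B` via a bounded intertwining operator `T` with everywhere defined bounded
inverse, and `T(D(A))` is a core for `B`, then
`σ_p(A) ⊆ σ_p(B) ⊆ σ(B) ⊆ σ(A)`. -/
theorem spectrum_chain_of_quasiSimilar {H K : Type*}
    [NormedAddCommGroup H] [InnerProductSpace ℂ H] [CompleteSpace H]
    [NormedAddCommGroup K] [InnerProductSpace ℂ K] [CompleteSpace K]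
    (A : H →ₗ.[ℂ] H) (B : K →ₗ.[ℂ] K)
    (hAdense : Dense (A.domain : Set H)) (hBdense : Dense (B.domain : Set K))
    (hAclosed : A.IsClosed) (hBclosed : B.IsClosed)
    (T : H →L[ℂ] K) (Tinv : K →L[ℂ] H)
    (hleft : ∀ ξ : H, Tinv (T ξ) = ξ) (hright : ∀ η : K, T (Tinv η) = η)
    (hmap : ∀ ξ : A.domain, T (ξ : H) ∈ B.domain)
    (hint : ∀ ξ : A.domain, B ⟨T (ξ : H), hmap ξ⟩ = T (A ξ))
    (hcore : ∀ (η : B.domain) (ε : ℝ), 0 < ε → ∃ ξ : A.domain,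
      ‖T (ξ : H) - (η : K)‖ < ε ∧ ‖B ⟨T (ξ : H), hmap ξ⟩ - B η‖ < ε) :
    pointSpectrum A ⊆ pointSpectrum B ∧
    pointSpectrum B ⊆ (resSet B)ᶜ ∧
    (resSet B)ᶜ ⊆ (resSet A)ᶜ := by

  refine ⟨?_, ?_, ?_⟩
  · rintro l ⟨ξ, hξ0, hξ⟩
    refine ⟨⟨T (ξ : H), hmap ξ⟩, ?_, ?_⟩
    · intro h
      apply hξ0
      have h' : T (ξ : H) = 0 := h
      have := hleft (ξ : H)
      rw [h', map_zero] at this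
      exact this.symm
    · show B ⟨T (ξ : H), hmap ξ⟩ = l • T (ξ : H)
      rw [hint ξ, hξ, map_smul]
  · rintro l ⟨ξ, hξ0, hξ⟩ ⟨R, hR1, hR2⟩
    have h := hR2 ξ
    rw [hξ, sub_self, map_zero] at h
    exact hξ0 h.symm
  · intro l hl hlA
    apply hl
    obtain ⟨R, hR1, hR2⟩ := hlA
    set S : K →L[ℂ] K := (T.comp R).comp Tinv with hS
    refine ⟨S, ?_, ?_⟩
    · intro η
      obtain ⟨h, hh⟩ := hR1 (Tinv η)
      refine ⟨hmap ⟨R (Tinv η), h⟩, ?_⟩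
      show B ⟨T (R (Tinv η)), _⟩ - l • T (R (Tinv η)) = η
      rw [hint ⟨R (Tinv η), h⟩]
      calc T (A ⟨R (Tinv η), h⟩) - l • T (R (Tinv η))
          = T (A ⟨R (Tinv η), h⟩ - l • R (Tinv η)) := by rw [map_sub, map_smul]
        _ = η := by rw [hh, hright]
    · intro ξ
      -- key : for ζ : A.domain, S (B ⟨T ζ, _⟩ - l • T ζ) = T ζ
      have key : ∀ ζ : A.domain,
          S ((B ⟨T (ζ : H), hmap ζ⟩ : K) - l • T (ζ : H)) = T (ζ : H) := by
        intro ζ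
        show T (R (Tinv ((B ⟨T (ζ : H), hmap ζ⟩ : K) - l • T (ζ : H)))) = T (ζ : H)
        rw [hint ζ, map_sub, map_smul, hleft, hleft, hR2 ζ]
      set d : K := S ((B ξ : K) - l • (ξ : K)) - (ξ : K) with hd
      have hC : (0 : ℝ) < ‖S‖ * (1 + ‖l‖) + 1 := by positivity
      have hsmall : ∀ ε : ℝ, 0 < ε → ‖d‖ ≤ (‖S‖ * (1 + ‖l‖) + 1) * ε := by
        intro ε hε
        obtain ⟨ζ, h1, h2⟩ := hcore ξ ε hε
        have hkey := key ζ
        calc ‖d‖ = ‖S ((B ξ : K) - l • (ξ : K))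
              - S ((B ⟨T (ζ : H), hmap ζ⟩ : K) - l • T (ζ : H))
              + (T (ζ : H) - (ξ : K))‖ := by rw [hd, hkey]; congr 1; abel
          _ ≤ ‖S ((B ξ : K) - l • (ξ : K))
              - S ((B ⟨T (ζ : H), hmap ζ⟩ : K) - l • T (ζ : H))‖
              + ‖T (ζ : H) - (ξ : K)‖ := norm_add_le _ _
          _ = ‖S (((B ξ : K) - (B ⟨T (ζ : H), hmap ζ⟩ : K))
              - l • ((ξ : K) - T (ζ : H)))‖ + ‖T (ζ : H) - (ξ : K)‖ := by
              rw [← map_sub]; congr 2; rw [smul_sub]; abel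
          _ ≤ ‖S‖ * ‖((B ξ : K) - (B ⟨T (ζ : H), hmap ζ⟩ : K))
              - l • ((ξ : K) - T (ζ : H))‖ + ‖T (ζ : H) - (ξ : K)‖ :=
              add_le_add_left (S.le_opNorm _) _
          _ ≤ ‖S‖ * (‖(B ξ : K) - (B ⟨T (ζ : H), hmap ζ⟩ : K)‖
              + ‖l‖ * ‖(ξ : K) - T (ζ : H)‖) + ‖T (ζ : H) - (ξ : K)‖ := by
              gcongr
              calc ‖((B ξ : K) - (B ⟨T (ζ : H), hmap ζ⟩ : K))
                  - l • ((ξ : K) - T (ζ : H))‖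
                  ≤ ‖(B ξ : K) - (B ⟨T (ζ : H), hmap ζ⟩ : K)‖
                  + ‖l • ((ξ : K) - T (ζ : H))‖ := norm_sub_le _ _
                _ = _ := by rw [norm_smul]
          _ ≤ ‖S‖ * (ε + ‖l‖ * ε) + ε := by
              have h2' : ‖(B ξ : K) - (B ⟨T (ζ : H), hmap ζ⟩ : K)‖ < ε := by
                rw [norm_sub_rev]; exact h2
              have h1' : ‖(ξ : K) - T (ζ : H)‖ < ε := by
                rw [norm_sub_rev]; exact h1
              gcongr
          _ = (‖S‖ * (1 + ‖l‖) + 1) * ε := by ring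
      have : ‖d‖ ≤ 0 := by
        refine le_of_forall_pos_le_add ?_
        intro ε hε
        have hε' : 0 < ε / (‖S‖ * (1 + ‖l‖) + 1) := div_pos hε hC
        calc ‖d‖ ≤ (‖S‖ * (1 + ‖l‖) + 1) * (ε / (‖S‖ * (1 + ‖l‖) + 1)) :=
              hsmall _ hε'
          _ = ε := by field_simp
          _ ≤ 0 + ε := by linarith
      have hd0 : d = 0 := norm_le_zero_iff.mp this
      have := sub_eq_zero.mp hd0
      exact this
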